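/- Let V be a variety and F, G monotone global operators on V for reflexive admissible relations satisfying the homomorphism property. Suppose that in the free algebra X of V on two generators x, y one has S ⊆ F_X(S) ∘ S⁻ ∘ G_X(S), where S is the smallest reflexive admissible relation on X containing (x,y) and S⁻ is its converse. Then V has a ternary term t that is Mal'cev modulo F_A and G_A in every algebra A of V. -/
import Mathlib


structure Signature where
  symbols : Type
  arity : symbols → ℕ

structure UAAlgebra (σ : Signature) where
  carrier : Type
  ops : ∀ s, (Fin (σ.arity s) → carrier) → carrier

namespace Paper

variable {σ : Signature}

/-- Binary relations on the carrier of an algebra. -/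
abbrev Rel (A : UAAlgebra σ) := A.carrier → A.carrier → Prop

/-- A relation is admissible (compatible) if it is preserved by all operations,
i.e. it is a subalgebra of `A × A`. -/
def Compatible (A : UAAlgebra σ) (R : Rel A) : Prop :=
  ∀ s (f g : Fin (σ.arity s) → A.carrier),
    (∀ j, R (f j) (g j)) → R (A.ops s f) (A.ops s g)

/-- Reflexive and admissible. -/
def RAdm (A : UAAlgebra σ) (R : Rel A) : Prop :=
  Reflexive R ∧ Compatible A R

/-- Relational composition. -/
def comp {A : UAAlgebra σ} (R S : Rel A) : Rel A :=
  fun a c => ∃ b, R a b ∧ S b c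

/-- `cl A X` : the least compatible relation containing `X`. -/
def cl (A : UAAlgebra σ) (X : Rel A) : Rel A :=
  fun a b => ∀ S : Rel A, Compatible A S → (∀ x y, X x y → S x y) → S a b

/-- The least reflexive compatible relation containing `X`. -/
def clRefl (A : UAAlgebra σ) (X : Rel A) : Rel A :=
  fun a b => ∀ S : Rel A, Reflexive S → Compatible A S → (∀ x y, X x y → S x y) → S a b

/-- `altComp R S n` is `R ∘ₙ S`, the alternating composition
`R ∘ S ∘ R ∘ ⋯` with `n` factors (`n - 1` occurrences of `∘`);
by convention `R ∘₀ S` is the identity relation. -/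
def altComp {A : UAAlgebra σ} (R S : Rel A) : ℕ → Rel A
  | 0 => Eq
  | n + 1 => comp R (altComp S R n)

/-- `relPow R n = Rⁿ`, with `R⁰` the identity relation. -/
def relPow {A : UAAlgebra σ} (R : Rel A) : ℕ → Rel A
  | 0 => Eq
  | n + 1 => comp R (relPow R n)

/-- The join `R + S = ⋃ₙ R ∘ₙ S`. -/
def join {A : UAAlgebra σ} (R S : Rel A) : Rel A :=
  fun a b => ∃ n, altComp R S n a b

/-- Converse relation `R⁻`. -/
def conv {A : UAAlgebra σ} (R : Rel A) : Rel A :=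
  fun a b => R b a

/-- Composition of a finite list of relations (empty list gives the identity). -/
def compList {A : UAAlgebra σ} : List (Rel A) → Rel A
  | [] => Eq
  | r :: l => comp r (compList l)

/-- Join of a family of relations: the union of all finite compositions of members. -/
def joinFam {A : UAAlgebra σ} {ι : Type} (R : ι → Rel A) : Rel A :=
  fun a b => ∃ l : List ι, compList (l.map R) a b

/-- The smallest congruence containing `X`. -/
def cg (A : UAAlgebra σ) (X : Rel A) : Rel A :=
  fun a b => ∀ S : Rel A, Equivalence S → Compatible A S →
    (∀ x y, X x y → S x y) → S a b

/-- Terms of the signature `σ` in `n` variables. -/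
inductive Term (σ : Signature) (n : ℕ) : Type
  | var : Fin n → Term σ n
  | op : ∀ s, (Fin (σ.arity s) → Term σ n) → Term σ n

/-- Evaluation of a term in an algebra under an environment. -/
def Term.eval {n : ℕ} (A : UAAlgebra σ) (env : Fin n → A.carrier) : Term σ n → A.carrier
  | .var k => env k
  | .op s args => A.ops s fun j => (args j).eval A env

/-- The ternary term operation induced by a ternary term. -/
def tApp (A : UAAlgebra σ) (t : Term σ 3) (a b c : A.carrier) : A.carrier :=
  t.eval A ![a, b, c]

/-- `t` is Mal'cev modulo `F` and `G`: whenever `a R b` with `R` reflexive admissible,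
`a F(R) t(a,b,b)` and `t(a,a,b) G(R) b`. -/
def MalcevMod (A : UAAlgebra σ) (F G : Rel A → Rel A) (t : Term σ 3) : Prop :=
  ∀ R : Rel A, RAdm A R → ∀ a b : A.carrier, R a b →
    F R a (tApp A t a b b) ∧ G R (tApp A t a a b) b

end Paper

open Paper

namespace Paper

variable {σ : Signature}

/-- A set of equations (each in some number of variables). -/
abbrev EqTheory (σ : Signature) := Set (Σ n : ℕ, Term σ n × Term σ n)

/-- `A` belongs to the variety axiomatized by `E`. -/
def Satisfies (A : UAAlgebra σ) (E : EqTheory σ) : Prop :=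
  ∀ e ∈ E, ∀ env : Fin e.1 → A.carrier, e.2.1.eval A env = e.2.2.eval A env

/-- Homomorphisms of algebras. -/
structure Hom (A B : UAAlgebra σ) where
  toFun : A.carrier → B.carrier
  map_ops : ∀ s f, toFun (A.ops s f) = B.ops s (toFun ∘ f)

/-- `φ(R)`: the smallest reflexive compatible relation on the codomain containing
`{(φ b, φ c) : b R c}`. -/
def mapRel {A B : UAAlgebra σ} (φ : Hom A B) (R : Rel A) : Rel B :=
  clRefl B (fun x y => ∃ a b, R a b ∧ φ.toFun a = x ∧ φ.toFun b = y)

/-- `X` with distinguished elements `x, y` is the free algebra on two generators in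
the variety of `E`. -/
def IsFree2 (E : EqTheory σ) (X : UAAlgebra σ) (x y : X.carrier) : Prop :=
  Satisfies X E ∧ ∀ A : UAAlgebra σ, Satisfies A E → ∀ a b : A.carrier,
    ∃! φ : Hom X A, φ.toFun x = a ∧ φ.toFun y = b

/-- `X` with `x, y, z` is the free algebra on three generators in the variety of `E`. -/
def IsFree3 (E : EqTheory σ) (X : UAAlgebra σ) (x y z : X.carrier) : Prop :=
  Satisfies X E ∧ ∀ A : UAAlgebra σ, Satisfies A E → ∀ a b c : A.carrier,
    ∃! φ : Hom X A, φ.toFun x = a ∧ φ.toFun y = b ∧ φ.toFun z = c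

/-- A global operator for reflexive admissible relations on the variety of `E`,
mapping reflexive admissible relations to reflexive admissible relations. -/
def GlobalOp (E : EqTheory σ)
    (F : ∀ A : UAAlgebra σ, Satisfies A E → Rel A → Rel A) : Prop :=
  ∀ (A : UAAlgebra σ) (hA : Satisfies A E) (R : Rel A), RAdm A R → RAdm A (F A hA R)

/-- Monotonicity of a global operator. -/
def MonotoneOp (E : EqTheory σ)
    (F : ∀ A : UAAlgebra σ, Satisfies A E → Rel A → Rel A) : Prop :=
  ∀ (A : UAAlgebra σ) (hA : Satisfies A E) (R S : Rel A), RAdm A R → RAdm A S →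
    (∀ a b, R a b → S a b) → ∀ a b, F A hA R a b → F A hA S a b

/-- The homomorphism property: `φ(F_B(R)) ⊆ F_A(φ(R))`. -/
def HomProp (E : EqTheory σ)
    (F : ∀ A : UAAlgebra σ, Satisfies A E → Rel A → Rel A) : Prop :=
  ∀ (B A : UAAlgebra σ) (hB : Satisfies B E) (hA : Satisfies A E) (φ : Hom B A)
    (R : Rel B), RAdm B R →
    ∀ b c, F B hB R b c → F A hA (mapRel φ R) (φ.toFun b) (φ.toFun c)

end Paper
namespace Paper

variable {σ : Signature}

lemma clRefl_radm (A : UAAlgebra σ) (X0 : Rel A) : RAdm A (clRefl A X0) := by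
  constructor
  · intro a S hrefl _ _; exact hrefl a
  · intro s f g h S hrefl hcomp hsub
    exact hcomp s f g (fun j => h j S hrefl hcomp hsub)

lemma clRefl_le (A : UAAlgebra σ) (X0 S : Rel A) (hrefl : Reflexive S)
    (hcomp : Compatible A S) (hsub : ∀ a b, X0 a b → S a b) :
    ∀ a b, clRefl A X0 a b → S a b := fun _ _ h => h S hrefl hcomp hsub

lemma clRefl_sub (A : UAAlgebra σ) (X0 : Rel A) : ∀ a b, X0 a b → clRefl A X0 a b :=
  fun _ _ h S _ _ hsub => hsub _ _ h

lemma hom_eval {A B : UAAlgebra σ} (φ : Hom A B) {n} (u : Term σ n)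
    (env : Fin n → A.carrier) :
    φ.toFun (u.eval A env) = u.eval B (fun k => φ.toFun (env k)) := by
  induction u with
  | var k => rfl
  | op s args ih =>
    show φ.toFun (A.ops s fun j => (args j).eval A env) = _
    rw [φ.map_ops]
    show B.ops s _ = B.ops s _
    congr 1
    funext j
    exact ih j

/-- Lift a binary term to a ternary term, sending variable 0 to 0 and 1 to 2. -/
def lift23 : Term σ 2 → Term σ 3
  | .var k => .var (if k = 0 then 0 else 2)
  | .op s args => .op s (fun j => lift23 (args j))

lemma lift23_eval (A : UAAlgebra σ) (s : Term σ 2) (a b c : A.carrier) :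
    (lift23 s).eval A ![a, b, c] = s.eval A ![a, c] := by
  induction s with
  | var k =>
    fin_cases k <;> rfl
  | op s args ih =>
    show A.ops s _ = A.ops s _
    congr 1
    funext j
    exact ih j

end Paper
namespace Paper

variable {σ : Signature}

/-- Elements generated by `x` and `y`. -/
def GenSet (X : UAAlgebra σ) (x y : X.carrier) : X.carrier → Prop :=
  fun w => ∃ s : Term σ 2, w = s.eval X ![x, y]

/-- The subalgebra generated by `x` and `y`. -/
def SubAlg (X : UAAlgebra σ) (x y : X.carrier) : UAAlgebra σ where
  carrier := {w : X.carrier // GenSet X x y w}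
  ops := fun s f => ⟨X.ops s fun j => (f j).1,
    ⟨Term.op s fun j => (f j).2.choose, by
      show X.ops s _ = X.ops s _
      congr 1; funext j; exact (f j).2.choose_spec⟩⟩

lemma subAlg_eval (X : UAAlgebra σ) (x y : X.carrier) {n} (u : Term σ n)
    (env : Fin n → (SubAlg X x y).carrier) :
    (u.eval (SubAlg X x y) env).1 = u.eval X (fun k => (env k).1) := by
  induction u with
  | var k => rfl
  | op s args ih =>
    show X.ops s _ = X.ops s _
    congr 1; funext j; exact ih j

lemma subAlg_sat (E : EqTheory σ) (X : UAAlgebra σ) (x y : X.carrier)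
    (hX : Satisfies X E) : Satisfies (SubAlg X x y) E := by
  intro e he env
  apply Subtype.ext
  rw [subAlg_eval, subAlg_eval]
  exact hX e he _

lemma free2_gen (E : EqTheory σ) (X : UAAlgebra σ) (x y : X.carrier)
    (hfree : IsFree2 E X x y) (hX : Satisfies X E) :
    ∀ w, GenSet X x y w := by
  have hx : GenSet X x y x := ⟨.var 0, rfl⟩
  have hy : GenSet X x y y := ⟨.var 1, rfl⟩
  obtain ⟨φ, hφ, -⟩ := hfree.2 (SubAlg X x y) (subAlg_sat E X x y hX) ⟨x, hx⟩ ⟨y, hy⟩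
  obtain ⟨χ, -, huniq⟩ := hfree.2 X hX x y
  have h1 : (⟨fun w => (φ.toFun w).1, fun s f => by
      show (φ.toFun (X.ops s f)).1 = X.ops s fun j => (φ.toFun (f j)).1
      rw [φ.map_ops]; rfl⟩ : Hom X X) = χ := by
    apply huniq
    constructor
    · show (φ.toFun x).1 = x
      rw [hφ.1]
    · show (φ.toFun y).1 = y
      rw [hφ.2]
  have h2 : (⟨id, fun s f => rfl⟩ : Hom X X) = χ := huniq _ ⟨rfl, rfl⟩
  intro w
  have h3 : (fun w => (φ.toFun w).1) = (id : X.carrier → X.carrier) := by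
    have := congrArg Hom.toFun (h1.trans h2.symm)
    exact this
  have h4 : (φ.toFun w).1 = w := congrFun h3 w
  exact h4 ▸ (φ.toFun w).2

end Paper

/-- Theorem 3, (x) ⇒ (i): if in the free algebra `X` of `V` on generators `x, y`
one has `S ⊆ F_X(S) ∘ S⁻ ∘ G_X(S)`, where `S` is the smallest reflexive admissible
relation containing `(x,y)`, then `V` has a ternary term Mal'cev modulo `F_A` and
`G_A` in every algebra `A` of `V`. -/
theorem stmt17 {σ : Signature} (E : EqTheory σ)
    (F G : ∀ A : UAAlgebra σ, Satisfies A E → Rel A → Rel A)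
    (hF : GlobalOp E F) (hG : GlobalOp E G)
    (hFmono : MonotoneOp E F) (hGmono : MonotoneOp E G)
    (hFhom : HomProp E F) (hGhom : HomProp E G)
    (X : UAAlgebra σ) (x y : X.carrier) (hfree : IsFree2 E X x y)
    (hX : Satisfies X E)
    (hS : ∀ a c, clRefl X (fun u v => u = x ∧ v = y) a c →
      comp (F X hX (clRefl X (fun u v => u = x ∧ v = y)))
        (comp (conv (clRefl X (fun u v => u = x ∧ v = y)))
          (G X hX (clRefl X (fun u v => u = x ∧ v = y)))) a c) :
    ∃ t : Term σ 3,
      ∀ (A : UAAlgebra σ) (hA : Satisfies A E), MalcevMod A (F A hA) (G A hA) t := by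
  set S : Rel X := clRefl X (fun u v => u = x ∧ v = y) with hSdef
  have hSxy : S x y := clRefl_sub X _ x y ⟨rfl, rfl⟩
  obtain ⟨p, hFp, q, hSqp, hGq⟩ := hS x y hSxy
  -- the relation of term pairs
  set T : Rel X := fun a b => ∃ u : Term σ 3,
    a = u.eval X ![x, x, y] ∧ b = u.eval X ![x, y, y] with hTdef
  have hTrefl : Reflexive T := by
    intro w
    obtain ⟨s, hs⟩ := free2_gen E X x y hfree hX w
    exact ⟨lift23 s, by rw [lift23_eval]; exact hs, by rw [lift23_eval]; exact hs⟩
  have hTcomp : Compatible X T := by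
    intro s f g h
    choose u hu1 hu2 using h
    refine ⟨.op s u, ?_, ?_⟩
    · show X.ops s f = X.ops s _
      congr 1; funext j; exact hu1 j
    · show X.ops s g = X.ops s _
      congr 1; funext j; exact hu2 j
  have hST : ∀ a b, S a b → T a b := by
    apply clRefl_le X _ T hTrefl hTcomp
    rintro a b ⟨rfl, rfl⟩
    exact ⟨.var 1, by simp [Term.eval], by simp [Term.eval]⟩
  obtain ⟨t, htq, htp⟩ := hST q p hSqp
  refine ⟨t, ?_⟩
  intro A hA R hR a b hab
  obtain ⟨φ, ⟨hφx, hφy⟩, -⟩ := hfree.2 A hA a b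
  have hpull : ∀ u v, S u v → R (φ.toFun u) (φ.toFun v) := by
    apply clRefl_le
    · intro w; exact hR.1 _
    · intro s f g h
      rw [φ.map_ops, φ.map_ops]
      exact hR.2 s _ _ h
    · rintro u v ⟨rfl, rfl⟩
      rw [hφx, hφy]; exact hab
  have hmap : ∀ u v, mapRel φ S u v → R u v := by
    apply clRefl_le A _ R hR.1 hR.2
    rintro u v ⟨a', b', hab', rfl, rfl⟩
    exact hpull a' b' hab'
  have hSR : RAdm X S := clRefl_radm X _
  have hp : φ.toFun p = tApp A t a b b := by
    rw [htp, hom_eval]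
    show Term.eval A _ t = Term.eval A _ t
    have henv : (fun k => φ.toFun (![x, y, y] k)) = ![a, b, b] := by
      funext k; fin_cases k <;> simp [hφx, hφy]
    rw [henv]
  have hq : φ.toFun q = tApp A t a a b := by
    rw [htq, hom_eval]
    show Term.eval A _ t = Term.eval A _ t
    have henv : (fun k => φ.toFun (![x, x, y] k)) = ![a, a, b] := by
      funext k; fin_cases k <;> simp [hφx, hφy]
    rw [henv]
  constructor
  · have h1 := hFhom X A hX hA φ S hSR x p hFp
    have h2 := hFmono A hA (mapRel φ S) R (clRefl_radm A _) hR hmap _ _ h1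
    rwa [hφx, hp] at h2
  · have h1 := hGhom X A hX hA φ S hSR q y hGq
    have h2 := hGmono A hA (mapRel φ S) R (clRefl_radm A _) hR hmap _ _ h1
    rwa [hφy, hq] at h2
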